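/- Let S ∈ {FT, T̄} and A, B ∈ M_n(S). The following are equivalent: (i) there is a surjective linear morphism from the column space C_S(B) onto C_S(A); (ii) there is an injective linear morphism from the row space R_S(A) into R_S(B); (iii) there exists C ∈ M_n(S) with C R-related to A (C_S(C) = C_S(A)) and C ≤_L B (R_S(C) ⊆ R_S(B)). -/

import Mathlib

section TropDefs

variable {S : Type*} [SemilatticeSup S] [Add S] {n : ℕ} [NeZero n]

/-- The (tropical) row space of `A`: all tropical linear combinations
`max_i (λ_i + A_i)` of the rows of `A`. -/
def tropRowSpan (A : Matrix (Fin n) (Fin n) S) : Set (Fin n → S) :=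
  {v | ∃ lam : Fin n → S,
    v = fun j => Finset.univ.sup' Finset.univ_nonempty fun i => lam i + A i j}

/-- The (tropical) column space of `A`, as a set of vectors in `S^n`. -/
def tropColSpan (A : Matrix (Fin n) (Fin n) S) : Set (Fin n → S) :=
  tropRowSpan A.transpose

/-- There is a surjective linear morphism (preserving `⊔` and tropical scaling)
from `X` onto `Y`. -/
def SurjLin (X Y : Set (Fin n → S)) : Prop :=
  ∃ f : (Fin n → S) → (Fin n → S),
    (∀ x ∈ X, ∀ y ∈ X, f (x ⊔ y) = f x ⊔ f y) ∧
    (∀ c : S, ∀ x ∈ X, (f fun j => c + x j) = fun j => c + f x j) ∧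
    (∀ x ∈ X, f x ∈ Y) ∧ ∀ y ∈ Y, ∃ x ∈ X, f x = y

/-- There is an injective linear morphism (preserving `⊔` and tropical scaling)
from `X` into `Y`. -/
def InjLin (X Y : Set (Fin n → S)) : Prop :=
  ∃ f : (Fin n → S) → (Fin n → S),
    (∀ x ∈ X, ∀ y ∈ X, f (x ⊔ y) = f x ⊔ f y) ∧
    (∀ c : S, ∀ x ∈ X, (f fun j => c + x j) = fun j => c + f x j) ∧
    (∀ x ∈ X, f x ∈ Y) ∧ Set.InjOn f X

/-- The statement of the theorem, for a given tropical semiring `S`: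
for all `A, B ∈ M_n(S)` the following are equivalent:
(i) `C_S(B)` surjects linearly onto `C_S(A)`;
(ii) `R_S(A)` embeds linearly into `R_S(B)`;
(iii) there is `C ∈ M_n(S)` with `C R A` (equal column spaces) and `C ≤_L B`
(row space contained in that of `B`). -/
def SurjEmbedTFAE (S : Type*) [SemilatticeSup S] [Add S] (n : ℕ) [NeZero n] : Prop :=
  ∀ A B : Matrix (Fin n) (Fin n) S,
    (SurjLin (tropColSpan B) (tropColSpan A) ↔ InjLin (tropRowSpan A) (tropRowSpan B)) ∧
    (SurjLin (tropColSpan B) (tropColSpan A) ↔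
      ∃ C : Matrix (Fin n) (Fin n) S,
        tropColSpan C = tropColSpan A ∧ tropRowSpan C ⊆ tropRowSpan B)

end TropDefs

set_option linter.unusedSectionVars false


section Glue

variable {n : ℕ} [NeZero n] {S : Type*} [LinearOrder S] [AddCommMonoid S]
  [CovariantClass S S (· + ·) (· ≤ ·)]

private lemma addler {a b : S} (h : a ≤ b) (c : S) : a + c ≤ b + c := by
  rw [add_comm a c, add_comm b c]; exact add_le_add_right h c

/-- tropical vector-matrix product (row vector times matrix). -/
def tvm (lam : Fin n → S) (M : Matrix (Fin n) (Fin n) S) : Fin n → S := fun j =>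
  Finset.univ.sup' Finset.univ_nonempty fun i => lam i + M i j

/-- tropical dot pairing. -/
def tdot (lam c : Fin n → S) : S :=
  Finset.univ.sup' Finset.univ_nonempty fun i => lam i + c i

lemma mem_rowSpan_iff {M : Matrix (Fin n) (Fin n) S} {v : Fin n → S} :
    v ∈ tropRowSpan M ↔ ∃ lam, v = tvm lam M := Iff.rfl

private lemma add_sup'' {ι : Type*} (s : Finset ι) (H : s.Nonempty) (c : S) (f : ι → S) :
    c + s.sup' H f = s.sup' H fun i => c + f i := by
  apply le_antisymm
  · obtain ⟨i, hi, hEq⟩ := Finset.exists_mem_eq_sup' H f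
    rw [hEq]
    exact Finset.le_sup' (fun i => c + f i) hi
  · exact Finset.sup'_le _ _ fun i hi => add_le_add_right (Finset.le_sup' f hi) c

private lemma sup'_add'' {ι : Type*} (s : Finset ι) (H : s.Nonempty) (c : S) (f : ι → S) :
    s.sup' H f + c = s.sup' H fun i => f i + c := by
  rw [add_comm, add_sup'' s H c f]
  exact Finset.sup'_congr H rfl fun i _ => add_comm _ _

private lemma add_sup2 (a b c : S) : a + (b ⊔ c) = (a + b) ⊔ (a + c) := by
  rcases le_total b c with h | h
  · rw [sup_eq_right.2 h, sup_eq_right.2 (add_le_add_right h a)]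
  · rw [sup_eq_left.2 h, sup_eq_left.2 (add_le_add_right h a)]

private lemma sup2_add (a b c : S) : (a ⊔ b) + c = (a + c) ⊔ (b + c) := by
  rw [add_comm, add_sup2, add_comm c a, add_comm c b]

private lemma sup'_sup'' {ι : Type*} (s : Finset ι) (H : s.Nonempty) (f g : ι → S) :
    (s.sup' H fun i => f i ⊔ g i) = s.sup' H f ⊔ s.sup' H g := by
  apply le_antisymm
  · exact Finset.sup'_le _ _ fun i hi =>
      sup_le_sup (Finset.le_sup' f hi) (Finset.le_sup' g hi)
  · exact sup_le
      (Finset.sup'_le _ _ fun i hi =>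
        le_trans le_sup_left (Finset.le_sup' (fun i => f i ⊔ g i) hi))
      (Finset.sup'_le _ _ fun i hi =>
        le_trans le_sup_right (Finset.le_sup' (fun i => f i ⊔ g i) hi))

private lemma swap_core (x y : Fin n → S) (z : Fin n → Fin n → S) :
    (Finset.univ.sup' Finset.univ_nonempty fun l =>
      x l + Finset.univ.sup' Finset.univ_nonempty fun i => y i + z i l)
    = Finset.univ.sup' Finset.univ_nonempty fun i =>
        y i + Finset.univ.sup' Finset.univ_nonempty fun l => x l + z i l := by
  have h1 : ∀ l, (x l + Finset.univ.sup' Finset.univ_nonempty fun i => y i + z i l)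
      = Finset.univ.sup' Finset.univ_nonempty fun i => y i + (x l + z i l) := by
    intro l
    rw [add_sup'' _ _ _ _]
    exact Finset.sup'_congr _ rfl fun i _ => by
      rw [← add_assoc, add_comm (x l) (y i), add_assoc]
  have h2 : ∀ i, (y i + Finset.univ.sup' Finset.univ_nonempty fun l => x l + z i l)
      = Finset.univ.sup' Finset.univ_nonempty fun l => y i + (x l + z i l) := by
    intro i; rw [add_sup'' _ _ _ _]
  rw [Finset.sup'_congr _ rfl fun l _ => h1 l, Finset.sup'_congr _ rfl fun i _ => h2 i]
  exact Finset.sup'_comm _ _ _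

/-- scaling a tvm. -/
lemma tvm_smul (c : S) (lam : Fin n → S) (M : Matrix (Fin n) (Fin n) S) :
    (fun j => c + tvm lam M j) = tvm (fun i => c + lam i) M := by
  funext j
  rw [tvm, add_sup'' _ _ _ _]
  exact Finset.sup'_congr _ rfl fun i _ => (add_assoc c (lam i) (M i j)).symm

lemma tvm_sup (lam mu : Fin n → S) (M : Matrix (Fin n) (Fin n) S) :
    tvm lam M ⊔ tvm mu M = tvm (lam ⊔ mu) M := by
  funext j
  show tvm lam M j ⊔ tvm mu M j = _
  rw [tvm, tvm, tvm, ← sup'_sup'' _ _ _ _]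
  exact Finset.sup'_congr _ rfl fun i _ => (sup2_add _ _ _).symm

lemma tvm_mono {lam mu : Fin n → S} (h : lam ≤ mu) (M : Matrix (Fin n) (Fin n) S) :
    tvm lam M ≤ tvm mu M := fun j =>
  Finset.sup'_le _ _ fun i hi =>
    le_trans (addler (h i) (M i j)) (Finset.le_sup' (fun i => mu i + M i j) hi)

lemma tdot_mono2 (lam : Fin n → S) {c d : Fin n → S} (h : c ≤ d) : tdot lam c ≤ tdot lam d :=
  Finset.sup'_le _ _ fun i hi =>
    le_trans (add_le_add_right (h i) (lam i)) (Finset.le_sup' (fun i => lam i + d i) hi)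

/-- the key commuting identity : `⟨lam, mu ⊗ Mᵀ⟩ = ⟨mu, lam ⊗ M⟩`. -/
lemma tdot_tvm_comm (lam mu : Fin n → S) (M : Matrix (Fin n) (Fin n) S) :
    tdot lam (tvm mu M.transpose) = tdot mu (tvm lam M) := by
  simp only [tdot, tvm, Matrix.transpose_apply]
  exact swap_core lam mu fun i l => M l i

end Glue

section Res

variable {n : ℕ} [NeZero n] {S : Type*} [LinearOrder S] [AddCommMonoid S]
  [CovariantClass S S (· + ·) (· ≤ ·)]
/-- every row of `M` lies in the row span of `M`. -/
lemma row_mem (res : S → S → S) (hres : ∀ z a b : S, z + b ≤ a ↔ z ≤ res a b)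
    (M : Matrix (Fin n) (Fin n) S) (i : Fin n) :
    ∃ lam, (fun j => M i j) = tvm lam M := by
  refine ⟨fun l => Finset.univ.inf' Finset.univ_nonempty fun j => res (M i j) (M l j), ?_⟩
  funext j
  apply le_antisymm
  · have h0 : (0 : S) ≤ Finset.univ.inf' Finset.univ_nonempty fun j' => res (M i j') (M i j') :=
      Finset.le_inf' _ _ fun j' _ => (hres 0 (M i j') (M i j')).1 (by rw [zero_add])
    calc M i j = 0 + M i j := (zero_add _).symm
      _ ≤ (Finset.univ.inf' Finset.univ_nonempty fun j' => res (M i j') (M i j')) + M i j :=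
          addler h0 _
      _ ≤ tvm (fun l => Finset.univ.inf' Finset.univ_nonempty fun j' => res (M i j') (M l j')) M j :=
          Finset.le_sup'
            (fun l => (Finset.univ.inf' Finset.univ_nonempty fun j' => res (M i j') (M l j')) + M l j)
            (Finset.mem_univ i)
  · exact Finset.sup'_le _ _ fun l _ => (hres _ _ _).2
      (Finset.inf'_le (fun j' => res (M i j') (M l j')) (Finset.mem_univ j))

/-- if every row of `C` lies in the row span of `B` then the whole span is contained. -/
lemma span_sub {C B : Matrix (Fin n) (Fin n) S}
    (hrows : ∀ i, ∃ d, (fun j => C i j) = tvm d B) :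
    tropRowSpan C ⊆ tropRowSpan B := by
  choose D hD using hrows
  rintro v ⟨lam, rfl⟩
  refine ⟨fun k => Finset.univ.sup' Finset.univ_nonempty fun i => lam i + D i k, ?_⟩
  funext j
  have hCij : ∀ i, C i j = Finset.univ.sup' Finset.univ_nonempty fun k => D i k + B k j :=
    fun i => congrFun (hD i) j
  calc (Finset.univ.sup' Finset.univ_nonempty fun i => lam i + C i j)
      = Finset.univ.sup' Finset.univ_nonempty fun i =>
          lam i + Finset.univ.sup' Finset.univ_nonempty fun k => D i k + B k j :=
        Finset.sup'_congr _ rfl fun i _ => by rw [hCij i]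
    _ = Finset.univ.sup' Finset.univ_nonempty fun k =>
          (Finset.univ.sup' Finset.univ_nonempty fun i => lam i + D i k) + B k j := by
        have := swap_core (x := fun k => B k j) (y := lam) (z := D)
        -- swap_core : sup'_l (x l + sup'_i (y i + z i l)) = sup'_i (y i + sup'_l (x l + z i l))
        -- we need : sup'_i (lam i + sup'_k (D i k + B k j)) = sup'_k (sup'_i (lam i + D i k) + B k j)
        rw [Finset.sup'_congr Finset.univ_nonempty rfl
          (fun i _ => (add_sup'' Finset.univ Finset.univ_nonempty (lam i)
            (fun k => D i k + B k j)))]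
        rw [Finset.sup'_congr Finset.univ_nonempty rfl
          (fun k _ => (sup'_add'' Finset.univ Finset.univ_nonempty (B k j)
            (fun i => lam i + D i k)))]
        rw [Finset.sup'_comm]
        refine Finset.sup'_congr _ rfl fun k _ => Finset.sup'_congr _ rfl fun i _ => ?_
        rw [add_assoc]

/-- a sup/scaling preserving map on a row span acts on `tvm` combinations as expected. -/
lemma map_span (res : S → S → S) (hres : ∀ z a b : S, z + b ≤ a ↔ z ≤ res a b)
    {M : Matrix (Fin n) (Fin n) S} {f : (Fin n → S) → (Fin n → S)}
    (hsup : ∀ x ∈ tropRowSpan M, ∀ y ∈ tropRowSpan M, f (x ⊔ y) = f x ⊔ f y)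
    (hsc : ∀ c : S, ∀ x ∈ tropRowSpan M, (f fun j => c + x j) = fun j => c + f x j)
    (lam : Fin n → S) :
    f (tvm lam M) = fun k => Finset.univ.sup' Finset.univ_nonempty
      fun i => lam i + f (fun j => M i j) k := by
  classical
  -- generators
  set g : Fin n → (Fin n → S) := fun i => fun j => lam i + M i j with hg
  have hgmem : ∀ i, g i ∈ tropRowSpan M := by
    intro i
    obtain ⟨mu, hmu⟩ := row_mem res hres M i
    refine ⟨fun l => lam i + mu l, ?_⟩
    show (fun j => lam i + M i j) = _
    funext j
    rw [show M i j = tvm mu M j from congrFun hmu j]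
    exact congrFun (tvm_smul (lam i) mu M) j
  have hfg : ∀ i, f (g i) = fun k => lam i + f (fun j => M i j) k := by
    intro i
    obtain ⟨mu, hmu⟩ := row_mem res hres M i
    have : (fun j => M i j) ∈ tropRowSpan M := ⟨mu, hmu⟩
    exact hsc (lam i) (fun j => M i j) this
  -- prove by induction on finsets : for any nonempty s,
  -- (sup of g over s) ∈ span and f (sup) = sup of f ∘ g
  have main : ∀ {s : Finset (Fin n)} (hs : s.Nonempty),
      (s.sup' hs g ∈ tropRowSpan M) ∧ f (s.sup' hs g) = s.sup' hs fun i => f (g i) := by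
    refine Finset.Nonempty.cons_induction (fun i => by simpa using hgmem i) ?_
    intro i s his hs ih
    rw [Finset.sup'_cons hs, Finset.sup'_cons hs]
    obtain ⟨ihmem, ihf⟩ := ih
    constructor
    · obtain ⟨mu1, h1⟩ := hgmem i
      obtain ⟨mu2, h2⟩ := ihmem
      exact ⟨mu1 ⊔ mu2, by rw [h1, h2]; exact (tvm_sup mu1 mu2 M).symm ▸ rfl⟩
    · rw [hsup _ (hgmem i) _ ihmem, ihf]
  have hv : tvm lam M = Finset.univ.sup' Finset.univ_nonempty g := by
    funext j
    rw [Finset.sup'_apply]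
    rfl
  rw [hv, (main Finset.univ_nonempty).2]
  funext k
  rw [Finset.sup'_apply]
  exact Finset.sup'_congr _ rfl fun i _ => congrFun (hfg i) k

end Res

section Main

variable {n : ℕ} [NeZero n] {S : Type*} [LinearOrder S] [AddCommMonoid S]
  [CovariantClass S S (· + ·) (· ≤ ·)]

/-- tropical matrix-vector application. -/
def tapp (D : Matrix (Fin n) (Fin n) S) (v : Fin n → S) : Fin n → S := fun k =>
  Finset.univ.sup' Finset.univ_nonempty fun l => D k l + v l

lemma tapp_sup (D : Matrix (Fin n) (Fin n) S) (x y : Fin n → S) :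
    tapp D (x ⊔ y) = tapp D x ⊔ tapp D y := by
  funext k
  show (Finset.univ.sup' Finset.univ_nonempty fun l => D k l + (x l ⊔ y l))
    = (Finset.univ.sup' Finset.univ_nonempty fun l => D k l + x l) ⊔
      (Finset.univ.sup' Finset.univ_nonempty fun l => D k l + y l)
  rw [← sup'_sup'']
  exact Finset.sup'_congr _ rfl fun l _ => add_sup2 _ _ _

lemma tapp_smul (D : Matrix (Fin n) (Fin n) S) (c : S) (x : Fin n → S) :
    (tapp D fun j => c + x j) = fun k => c + tapp D x k := by
  funext k
  show _ = c + Finset.univ.sup' Finset.univ_nonempty fun l => D k l + x l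
  rw [add_sup'']
  exact Finset.sup'_congr _ rfl fun l _ => by rw [add_left_comm]

lemma tapp_tvm (D N : Matrix (Fin n) (Fin n) S) (mu : Fin n → S) :
    tapp D (tvm mu N) = fun k => Finset.univ.sup' Finset.univ_nonempty fun j =>
      mu j + Finset.univ.sup' Finset.univ_nonempty fun l => D k l + N j l := by
  funext k
  exact swap_core (D k) mu fun j l => N j l

/-- (iii) implies (i). -/
lemma dir_iii_surj (res : S → S → S) (hres : ∀ z a b : S, z + b ≤ a ↔ z ≤ res a b)
    {A B C : Matrix (Fin n) (Fin n) S}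
    (hC1 : tropColSpan C = tropColSpan A) (hC2 : tropRowSpan C ⊆ tropRowSpan B) :
    SurjLin (tropColSpan B) (tropColSpan A) := by
  have hrows : ∀ i, ∃ d, (fun j => C i j) = tvm d B := by
    intro i
    obtain ⟨lam, hlam⟩ := row_mem res hres C i
    exact hC2 ⟨lam, hlam⟩
  choose D hD using hrows
  have hDC : ∀ k j, C k j = Finset.univ.sup' Finset.univ_nonempty fun l => D k l + B l j :=
    fun k j => congrFun (hD k) j
  refine ⟨tapp D, fun x _ y _ => tapp_sup D x y, fun c x _ => tapp_smul D c x, ?_, ?_⟩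
  · rintro x ⟨mu, rfl⟩
    rw [← hC1]
    refine ⟨mu, ?_⟩
    show tapp D (tvm mu B.transpose) = tvm mu C.transpose
    rw [tapp_tvm D]
    funext k
    refine Finset.sup'_congr _ rfl fun j _ => ?_
    simp only [Matrix.transpose_apply]
    rw [← hDC k j]
  · rintro y hy
    rw [← hC1] at hy
    obtain ⟨mu, rfl⟩ := hy
    refine ⟨tvm mu B.transpose, ⟨mu, rfl⟩, ?_⟩
    show tapp D (tvm mu B.transpose) = tvm mu C.transpose
    rw [tapp_tvm D]
    funext k
    refine Finset.sup'_congr _ rfl fun j _ => ?_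
    simp only [Matrix.transpose_apply]
    rw [← hDC k j]

/-- (iii) implies (ii). -/
lemma dir_iii_inj (res : S → S → S) (hres : ∀ z a b : S, z + b ≤ a ↔ z ≤ res a b)
    {A B C : Matrix (Fin n) (Fin n) S}
    (hC1 : tropColSpan C = tropColSpan A) (hC2 : tropRowSpan C ⊆ tropRowSpan B) :
    InjLin (tropRowSpan A) (tropRowSpan B) := by
  have hPr : ∀ k, ∃ p, (fun i => C i k) = tvm p A.transpose := by
    intro k
    have : (fun i => C i k) ∈ tropRowSpan C.transpose := row_mem res hres C.transpose k
    rw [show tropRowSpan C.transpose = tropColSpan C from rfl, hC1] at this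
    exact this
  have hQr : ∀ k, ∃ q, (fun i => A i k) = tvm q C.transpose := by
    intro k
    have : (fun i => A i k) ∈ tropRowSpan A.transpose := row_mem res hres A.transpose k
    rw [show tropRowSpan A.transpose = tropColSpan A from rfl, ← hC1] at this
    exact this
  choose P hP using hPr
  choose Q hQ using hQr
  have hPA : ∀ i k, C i k = Finset.univ.sup' Finset.univ_nonempty fun j => P k j + A i j :=
    fun i k => congrFun (hP k) i
  have hQC : ∀ i k, A i k = Finset.univ.sup' Finset.univ_nonempty fun j => Q k j + C i j :=
    fun i k => congrFun (hQ k) i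
  have hgA : ∀ lam, tapp P (tvm lam A) = tvm lam C := by
    intro lam
    rw [tapp_tvm P]
    funext k
    exact Finset.sup'_congr _ rfl fun i _ => by rw [← hPA i k]
  have hhC : ∀ lam, tapp Q (tvm lam C) = tvm lam A := by
    intro lam
    rw [tapp_tvm Q]
    funext k
    exact Finset.sup'_congr _ rfl fun i _ => by rw [← hQC i k]
  refine ⟨tapp P, fun x _ y _ => tapp_sup P x y, fun c x _ => tapp_smul P c x, ?_, ?_⟩
  · rintro x ⟨lam, rfl⟩
    exact hC2 ⟨lam, (hgA lam).symm ▸ rfl⟩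
  · rintro x ⟨lam, rfl⟩ y ⟨lam', rfl⟩ hxy
    have hxy' : tapp P (tvm lam A) = tapp P (tvm lam' A) := hxy
    have : tvm lam C = tvm lam' C := by rw [← hgA, ← hgA]; exact hxy'
    calc tvm lam A = tapp Q (tvm lam C) := (hhC lam).symm
      _ = tapp Q (tvm lam' C) := by rw [this]
      _ = tvm lam' A := hhC lam'

end Main

section Hard

variable {n : ℕ} [NeZero n] {S : Type*} [LinearOrder S] [AddCommMonoid S]
  [CovariantClass S S (· + ·) (· ≤ ·)]

/-- the key duality property of a tropical semiring : any vector inducing a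
monotone functional on combinations is in the row space. -/
def KeyProp (S : Type*) [LinearOrder S] [AddCommMonoid S] (n : ℕ) [NeZero n] : Prop :=
  ∀ (B : Matrix (Fin n) (Fin n) S) (c : Fin n → S),
    (∀ lam mu : Fin n → S, tvm lam B.transpose ≤ tvm mu B.transpose →
      tdot lam c ≤ tdot mu c) → ∃ d, c = tvm d B

/-- (i) implies (iii). -/
lemma dir_surj_iii (res : S → S → S) (hres : ∀ z a b : S, z + b ≤ a ↔ z ≤ res a b)
    (hkey : KeyProp S n) {A B : Matrix (Fin n) (Fin n) S}
    (h : SurjLin (tropColSpan B) (tropColSpan A)) :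
    ∃ C : Matrix (Fin n) (Fin n) S,
      tropColSpan C = tropColSpan A ∧ tropRowSpan C ⊆ tropRowSpan B := by
  obtain ⟨f, hsup, hsc, hinto, honto⟩ := h
  set C : Matrix (Fin n) (Fin n) S := fun k l => f (fun k' => B k' l) k with hCdef
  have hstep : ∀ mu, f (tvm mu B.transpose) = tvm mu C.transpose := by
    intro mu
    have := map_span res hres (M := B.transpose) hsup hsc mu
    rw [this]
    funext k
    exact Finset.sup'_congr _ rfl fun l _ => rfl
  have hmemB : ∀ mu, tvm mu B.transpose ∈ tropColSpan B := fun mu => ⟨mu, rfl⟩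
  refine ⟨C, ?_, ?_⟩
  · apply Set.eq_of_subset_of_subset
    · rintro v ⟨mu, rfl⟩
      have : tvm mu C.transpose ∈ tropColSpan A := by
        rw [← hstep mu]; exact hinto _ (hmemB mu)
      exact this
    · intro y hy
      obtain ⟨x, hxB, hfx⟩ := honto y hy
      obtain ⟨mu, rfl⟩ := hxB
      refine ⟨mu, ?_⟩
      rw [← hfx]
      exact hstep mu
  · apply span_sub
    intro k
    apply hkey B (fun l => C k l)
    intro lam mu hle
    have hmono : f (tvm lam B.transpose) ≤ f (tvm mu B.transpose) := by
      have he : tvm lam B.transpose ⊔ tvm mu B.transpose = tvm mu B.transpose :=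
        sup_eq_right.2 hle
      have := hsup _ (hmemB lam) _ (hmemB mu)
      rw [he] at this
      rw [this]
      exact le_sup_left
    have h1 : tvm lam C.transpose ≤ tvm mu C.transpose := by
      rw [← hstep lam, ← hstep mu]; exact hmono
    have h2 := h1 k
    exact h2

/-- (ii) implies (iii). -/
lemma dir_inj_iii (res : S → S → S) (hres : ∀ z a b : S, z + b ≤ a ↔ z ≤ res a b)
    (hkey : KeyProp S n) {A B : Matrix (Fin n) (Fin n) S}
    (h : InjLin (tropRowSpan A) (tropRowSpan B)) :
    ∃ C : Matrix (Fin n) (Fin n) S,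
      tropColSpan C = tropColSpan A ∧ tropRowSpan C ⊆ tropRowSpan B := by
  obtain ⟨g, hsup, hsc, hinto, hinj⟩ := h
  set C : Matrix (Fin n) (Fin n) S := fun i j => g (fun j' => A i j') j with hCdef
  have hmemA : ∀ lam, tvm lam A ∈ tropRowSpan A := fun lam => ⟨lam, rfl⟩
  have hstep : ∀ lam, g (tvm lam A) = tvm lam C := by
    intro lam
    have := map_span res hres (M := A) hsup hsc lam
    rw [this]
    funext k
    exact Finset.sup'_congr _ rfl fun l _ => rfl
  have hmono : ∀ {lam lam'}, tvm lam A ≤ tvm lam' A → tvm lam C ≤ tvm lam' C := by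
    intro lam lam' hle
    rw [← hstep lam, ← hstep lam']
    have he : tvm lam A ⊔ tvm lam' A = tvm lam' A := sup_eq_right.2 hle
    have := hsup _ (hmemA lam) _ (hmemA lam')
    rw [he] at this
    rw [this]
    exact le_sup_left
  have hrefl : ∀ {lam lam'}, tvm lam C ≤ tvm lam' C → tvm lam A ≤ tvm lam' A := by
    intro lam lam' hle
    have he : g (tvm lam A) ⊔ g (tvm lam' A) = g (tvm lam' A) := by
      rw [hstep lam, hstep lam']; exact sup_eq_right.2 hle
    have hsupA : tvm lam A ⊔ tvm lam' A = tvm (lam ⊔ lam') A := tvm_sup lam lam' A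
    have e2 : g (tvm (lam ⊔ lam') A) = g (tvm lam' A) := by
      rw [← hsupA, hsup _ (hmemA lam) _ (hmemA lam'), he]
    have e3 : tvm (lam ⊔ lam') A = tvm lam' A := hinj (hmemA _) (hmemA _) e2
    calc tvm lam A ≤ tvm (lam ⊔ lam') A := tvm_mono le_sup_left A
      _ = tvm lam' A := e3
  refine ⟨C, ?_, ?_⟩
  · apply Set.eq_of_subset_of_subset
    · rintro v ⟨mu, rfl⟩
      have hv : tvm mu C.transpose ∈ tropRowSpan A.transpose := by
        apply hkey A.transpose
        intro lam lam' hle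
        rw [Matrix.transpose_transpose] at hle
        have h1 : tvm lam C ≤ tvm lam' C := hmono hle
        calc tdot lam (tvm mu C.transpose) = tdot mu (tvm lam C) := tdot_tvm_comm lam mu C
          _ ≤ tdot mu (tvm lam' C) := tdot_mono2 mu h1
          _ = tdot lam' (tvm mu C.transpose) := (tdot_tvm_comm lam' mu C).symm
      exact hv
    · rintro v ⟨mu, rfl⟩
      have hv : tvm mu A.transpose ∈ tropRowSpan C.transpose := by
        apply hkey C.transpose
        intro lam lam' hle
        rw [Matrix.transpose_transpose] at hle
        have h1 : tvm lam A ≤ tvm lam' A := hrefl hle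
        calc tdot lam (tvm mu A.transpose) = tdot mu (tvm lam A) := tdot_tvm_comm lam mu A
          _ ≤ tdot mu (tvm lam' A) := tdot_mono2 mu h1
          _ = tdot lam' (tvm mu A.transpose) := (tdot_tvm_comm lam' mu A).symm
      exact hv
  · apply span_sub
    intro i
    exact hinto (fun j' => A i j') (row_mem res hres A i)

theorem glueAll (res : S → S → S) (hres : ∀ z a b : S, z + b ≤ a ↔ z ≤ res a b)
    (hkey : KeyProp S n) : SurjEmbedTFAE S n := by
  intro A B
  constructor
  · constructor
    · intro h
      obtain ⟨C, h1, h2⟩ := dir_surj_iii res hres hkey h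
      exact dir_iii_inj res hres h1 h2
    · intro h
      obtain ⟨C, h1, h2⟩ := dir_inj_iii res hres hkey h
      exact dir_iii_surj res hres h1 h2
  · constructor
    · exact dir_surj_iii res hres hkey
    · rintro ⟨C, h1, h2⟩
      exact dir_iii_surj res hres h1 h2

end Hard

section KeyReal

lemma keyR (n : ℕ) [NeZero n] : KeyProp ℝ n := by
  intro B c hstar
  set d : Fin n → ℝ := fun k => Finset.univ.inf' Finset.univ_nonempty fun l => c l - B k l
    with hd
  have hle1 : ∀ i, tvm d B i ≤ c i := by
    intro i
    apply Finset.sup'_le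
    intro k _
    have h1 : d k ≤ c i - B k i :=
      Finset.inf'_le (fun l => c l - B k l) (Finset.mem_univ i)
    linarith
  have hle2 : ∀ i0, c i0 ≤ tvm d B i0 := by
    intro i0
    set p := tvm d B i0 with hp
    set m : Fin n → ℝ := fun l => Finset.univ.inf' Finset.univ_nonempty
      fun k => B k i0 - B k l with hm
    set mu : Fin n → ℝ := fun l => p - c l with hmu
    have hBle : tvm m B.transpose ≤ tvm mu B.transpose := by
      intro k
      apply Finset.sup'_le
      intro l _
      have h1 : m l ≤ B k i0 - B k l := Finset.inf'_le _ (Finset.mem_univ k)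
      have hdp : d k + B k i0 ≤ p :=
        Finset.le_sup' (fun k' => d k' + B k' i0) (Finset.mem_univ k)
      obtain ⟨l1, _, hl1⟩ := Finset.exists_mem_eq_inf' Finset.univ_nonempty
        (fun l => c l - B k l)
      have hterm : B k i0 ≤ mu l1 + B.transpose l1 k := by
        simp only [Matrix.transpose_apply, hmu]
        have hdk1 : d k = c l1 - B k l1 := hl1
        linarith
      calc m l + B.transpose l k ≤ B k i0 := by
            simp only [Matrix.transpose_apply]; linarith
        _ ≤ mu l1 + B.transpose l1 k := hterm
        _ ≤ _ := Finset.le_sup' (fun l => mu l + B.transpose l k) (Finset.mem_univ l1)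
    have hmain := hstar m mu hBle
    have hmu_c : tdot mu c = p := by
      rw [tdot]
      rw [Finset.sup'_congr Finset.univ_nonempty rfl
        (fun l _ => show mu l + c l = p by simp [hmu])]
      exact Finset.sup'_const _ _
    have hm_c : c i0 ≤ tdot m c := by
      have hm0 : (0:ℝ) ≤ m i0 :=
        Finset.le_inf' _ _ fun k _ => by simp
      calc c i0 = 0 + c i0 := by ring
        _ ≤ m i0 + c i0 := by linarith
        _ ≤ tdot m c := Finset.le_sup' (fun l => m l + c l) (Finset.mem_univ i0)
    calc c i0 ≤ tdot m c := hm_c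
      _ ≤ tdot mu c := hmain
      _ = p := hmu_c
  exact ⟨d, funext fun i => le_antisymm (hle2 i) (hle1 i)⟩

end KeyReal

section KeyEReal

noncomputable def eres (a b : EReal) : EReal :=
  if b = ⊥ then ⊤ else if a = ⊤ then ⊤ else if b = ⊤ then ⊥ else if a = ⊥ then ⊥ else a - b

lemma eres_galois : ∀ z a b : EReal, z + b ≤ a ↔ z ≤ eres a b := by
  intro z a b
  unfold eres
  rcases eq_or_ne b ⊥ with hb | hb
  · simp [hb]
  rcases eq_or_ne a ⊤ with ha | ha
  · simp [hb, ha]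
  rcases eq_or_ne b ⊤ with hb2 | hb2
  · subst hb2
    rw [if_neg hb, if_neg ha, if_pos rfl]
    constructor
    · intro h
      by_contra hz
      have hzb : z ≠ ⊥ := fun hzz => hz (hzz ▸ le_refl _)
      rw [EReal.add_top_of_ne_bot hzb] at h
      exact ha (top_le_iff.1 h)
    · intro h
      rw [le_bot_iff.1 h, EReal.bot_add]
      exact bot_le
  · -- b is real
    lift b to ℝ using ⟨hb2, hb⟩
    rcases eq_or_ne a ⊥ with ha2 | ha2
    · simp only [if_neg hb, if_neg ha, if_neg hb2, if_pos ha2, ha2]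
      constructor
      · intro h
        induction z using EReal.rec with
        | bot => exact le_refl _
        | coe zr =>
          exfalso
          have : ((zr:ℝ):EReal) + (b:EReal) = ((zr + b : ℝ) : EReal) := by norm_cast
          rw [this] at h
          exact (EReal.coe_ne_bot _) (le_bot_iff.1 h)
        | top =>
          exfalso
          rw [EReal.top_add_of_ne_bot (EReal.coe_ne_bot b)] at h
          exact absurd (le_bot_iff.1 h) (by simp)
      · intro h
        rw [le_bot_iff.1 h, EReal.bot_add]
    · -- a real too
      lift a to ℝ using ⟨ha, ha2⟩
      simp only [if_neg hb, if_neg ha, if_neg hb2, if_neg ha2]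
      rw [show (a:EReal) - (b:EReal) = ((a - b : ℝ) : EReal) from (EReal.coe_sub a b).symm]
      induction z using EReal.rec with
      | bot => simp
      | coe zr =>
        rw [show ((zr:ℝ):EReal) + (b:EReal) = ((zr + b : ℝ) : EReal) by norm_cast]
        rw [EReal.coe_le_coe_iff, EReal.coe_le_coe_iff]
        constructor <;> intro h <;> linarith
      | top =>
        rw [EReal.top_add_of_ne_bot (EReal.coe_ne_bot b)]
        simp only [top_le_iff]
        constructor
        · intro h; exact absurd h (EReal.coe_ne_top a)
        · intro h
          exact absurd h (EReal.coe_ne_top _)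

lemma eres_ne_top {a b : EReal} (h : eres a b ≠ ⊤) : b ≠ ⊥ ∧ a ≠ ⊤ := by
  unfold eres at h
  constructor
  · intro hb; rw [if_pos hb] at h; exact h rfl
  · intro ha
    rcases eq_or_ne b ⊥ with hb | hb
    · rw [if_pos hb] at h; exact h rfl
    · rw [if_neg hb, if_pos ha] at h; exact h rfl

lemma eres_bot_right (a : EReal) : eres a ⊥ = ⊤ := by unfold eres; rw [if_pos rfl]

lemma eres_top_right {a : EReal} (ha : a ≠ ⊤) : eres a ⊤ = ⊥ := by
  unfold eres
  rw [if_neg (by simp : (⊤:EReal) ≠ ⊥), if_neg ha, if_pos rfl]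

lemma eres_coe_coe (a b : ℝ) : eres (a:EReal) (b:EReal) = ((a - b : ℝ) : EReal) := by
  unfold eres
  rw [if_neg (EReal.coe_ne_bot b), if_neg (EReal.coe_ne_top a), if_neg (EReal.coe_ne_top b),
    if_neg (EReal.coe_ne_bot a)]
  exact (EReal.coe_sub a b).symm

end KeyEReal

section KeyE

lemma keyE (n : ℕ) [NeZero n] : KeyProp EReal n := by
  classical
  intro B c hstar
  set d : Fin n → EReal := fun k => Finset.univ.inf' Finset.univ_nonempty
    fun l => eres (c l) (B k l) with hd
  have hle1 : ∀ i, tvm d B i ≤ c i := by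
    intro i
    apply Finset.sup'_le
    intro k _
    exact (eres_galois (d k) (c i) (B k i)).2 (Finset.inf'_le _ (Finset.mem_univ i))
  have hle2 : ∀ i0, c i0 ≤ tvm d B i0 := by
    intro i0
    set p := tvm d B i0 with hp
    rcases eq_or_ne p ⊤ with hptop | hptop
    · rw [hptop]; exact le_top
    by_contra hcp
    have hpc : p < c i0 := lt_of_not_ge hcp
    have hbot : (⊥:EReal) < c i0 := lt_of_le_of_lt bot_le hpc
    obtain ⟨t, ht⟩ : ∃ t : ℝ, ∀ l, c l ≠ ⊤ → (t : EReal) + c l < c i0 := by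
      have hl : ∀ l : Fin n, ∃ tl : ℝ, ∀ t' : ℝ, t' ≤ tl → c l ≠ ⊤ →
          (t' : EReal) + c l < c i0 := by
        intro l
        rcases eq_or_ne (c l) ⊤ with h1 | h1
        · exact ⟨0, fun t' _ h2 => absurd h1 h2⟩
        rcases eq_or_ne (c l) ⊥ with h2 | h2
        · refine ⟨0, fun t' _ _ => ?_⟩
          rw [h2, EReal.add_bot]
          exact hbot
        obtain ⟨s, hs⟩ : ∃ s : ℝ, c l = (s:EReal) := by
          lift c l to ℝ using ⟨h1, h2⟩ with s
          exact ⟨s, rfl⟩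
        rcases eq_or_ne (c i0) ⊤ with h3 | h3
        · refine ⟨0, fun t' _ _ => ?_⟩
          rw [hs, h3, show (t':EReal) + (s:EReal) = ((t' + s : ℝ):EReal) from by norm_cast]
          exact EReal.coe_lt_top _
        have h4 : c i0 ≠ ⊥ := ne_of_gt hbot
        obtain ⟨u, hu⟩ : ∃ u : ℝ, c i0 = (u:EReal) := by
          lift c i0 to ℝ using ⟨h3, h4⟩ with u
          exact ⟨u, rfl⟩
        refine ⟨u - s - 1, fun t' ht' _ => ?_⟩
        rw [hs, hu, show (t':EReal) + (s:EReal) = ((t' + s : ℝ):EReal) from by norm_cast]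
        exact_mod_cast (by linarith : t' + s < u)
      choose tl htl using hl
      refine ⟨Finset.univ.inf' Finset.univ_nonempty tl, fun l hcl => ?_⟩
      exact htl l _ (Finset.inf'_le tl (Finset.mem_univ l)) hcl
    set m : Fin n → EReal := fun l => Finset.univ.inf' Finset.univ_nonempty
      fun k => eres (B k i0) (B k l) with hm
    have hm0 : (0:EReal) ≤ m i0 :=
      Finset.le_inf' _ _ fun k _ => (eres_galois 0 (B k i0) (B k i0)).1 (by rw [zero_add])
    set mu : Fin n → EReal := fun l =>
      if c l = ⊤ then eres p (c l) else max (eres p (c l)) (t:EReal) with hmu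
    have hmu_ge : ∀ l, eres p (c l) ≤ mu l := by
      intro l
      simp only [hmu]
      split_ifs
      · exact le_refl _
      · exact le_max_left _ _
    have hfeas : ∀ k, B k i0 ≤ Finset.univ.sup' Finset.univ_nonempty
        fun l => mu l + B k l := by
      intro k
      rcases eq_or_ne (B k i0) ⊥ with hx | hx
      · rw [hx]; exact bot_le
      obtain ⟨l1, _, hl1⟩ := Finset.exists_mem_eq_inf' Finset.univ_nonempty
        (fun l => eres (c l) (B k l))
      have hdk1 : d k = eres (c l1) (B k l1) := hl1
      have hdkp : d k + B k i0 ≤ p :=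
        Finset.le_sup' (fun k' => d k' + B k' i0) (Finset.mem_univ k)
      have hdkT : d k ≠ ⊤ := by
        intro hT
        rw [hT, EReal.top_add_of_ne_bot hx] at hdkp
        exact hptop (top_le_iff.1 hdkp)
      obtain ⟨hB1, hc1⟩ := eres_ne_top (hdk1 ▸ hdkT)
      have hmul1 : (t:EReal) ≤ mu l1 := by
        simp only [hmu]
        rw [if_neg hc1]
        exact le_max_right _ _
      rcases eq_or_ne (B k l1) ⊤ with hb | hb
      · have htp : (⊤:EReal) ≤ mu l1 + B k l1 := by
          rw [hb]
          calc (⊤:EReal) = (t:EReal) + ⊤ :=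
                (EReal.add_top_of_ne_bot (EReal.coe_ne_bot t)).symm
            _ ≤ mu l1 + ⊤ := addler hmul1 _
        exact le_trans le_top
          (le_trans htp (Finset.le_sup' (fun l => mu l + B k l) (Finset.mem_univ l1)))
      rcases eq_or_ne (c l1) ⊥ with hc2 | hc2
      · have hmt : (⊤:EReal) ≤ mu l1 := by
          have h5 := hmu_ge l1
          rw [hc2, eres_bot_right] at h5
          exact h5
        have htp : (⊤:EReal) ≤ mu l1 + B k l1 := by
          rw [top_le_iff.1 hmt, EReal.top_add_of_ne_bot hB1]
        exact le_trans le_top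
          (le_trans htp (Finset.le_sup' (fun l => mu l + B k l) (Finset.mem_univ l1)))
      · obtain ⟨r, hr⟩ : ∃ r:ℝ, B k l1 = (r:EReal) := by
          lift B k l1 to ℝ using ⟨hb, hB1⟩ with r
          exact ⟨r, rfl⟩
        obtain ⟨s, hs⟩ : ∃ s:ℝ, c l1 = (s:EReal) := by
          lift c l1 to ℝ using ⟨hc1, hc2⟩ with s
          exact ⟨s, rfl⟩
        have hdkr : d k = ((s - r : ℝ):EReal) := by
          rw [hdk1, hr, hs, eres_coe_coe]
        have hxT : B k i0 ≠ ⊤ := by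
          intro hT
          rw [hdkr, hT, EReal.add_top_of_ne_bot (EReal.coe_ne_bot _)] at hdkp
          exact hptop (top_le_iff.1 hdkp)
        obtain ⟨xr, hxr⟩ : ∃ xr:ℝ, B k i0 = (xr:EReal) := by
          lift B k i0 to ℝ using ⟨hxT, hx⟩ with xr
          exact ⟨xr, rfl⟩
        have hple : ((s - r + xr : ℝ):EReal) ≤ p := by
          rw [hdkr, hxr] at hdkp
          calc ((s - r + xr:ℝ):EReal) = ((s-r:ℝ):EReal) + (xr:EReal) := by norm_cast
            _ ≤ p := hdkp
        have hpbot : p ≠ ⊥ := by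
          intro h
          rw [h] at hple
          exact (EReal.coe_ne_bot _) (le_bot_iff.1 hple)
        obtain ⟨pr, hpr⟩ : ∃ pr:ℝ, p = (pr:EReal) := by
          lift p to ℝ using ⟨hptop, hpbot⟩ with pr
          exact ⟨pr, rfl⟩
        have hprge : s - r + xr ≤ pr := by
          rw [hpr] at hple
          exact_mod_cast hple
        have hterm : (xr:EReal) ≤ mu l1 + B k l1 := by
          rw [hr]
          have h1 : ((pr - s : ℝ):EReal) ≤ mu l1 := by
            have h6 := hmu_ge l1
            rw [hs, hpr, eres_coe_coe] at h6
            exact h6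
          calc (xr:EReal) ≤ ((pr - s + r:ℝ):EReal) := by exact_mod_cast (by linarith : xr ≤ pr - s + r)
            _ = ((pr - s:ℝ):EReal) + (r:EReal) := by norm_cast
            _ ≤ mu l1 + (r:EReal) := addler h1 _
        rw [hxr]
        exact le_trans hterm (Finset.le_sup' (fun l => mu l + B k l) (Finset.mem_univ l1))
    have hBle : tvm m B.transpose ≤ tvm mu B.transpose := by
      intro k
      have h1 : tvm m B.transpose k ≤ B k i0 := Finset.sup'_le _ _ fun l _ =>
        (eres_galois (m l) (B k i0) (B k l)).2 (Finset.inf'_le _ (Finset.mem_univ k))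
      exact le_trans h1 (hfeas k)
    have hmain := hstar m mu hBle
    have hlower : c i0 ≤ tdot m c :=
      calc c i0 = 0 + c i0 := (zero_add _).symm
        _ ≤ m i0 + c i0 := addler hm0 _
        _ ≤ tdot m c := Finset.le_sup' (fun l => m l + c l) (Finset.mem_univ i0)
    have hupper : tdot mu c < c i0 := by
      rw [tdot, Finset.sup'_lt_iff]
      intro l _
      rcases eq_or_ne (c l) ⊤ with hcl | hcl
      · have hml : mu l = ⊥ := by
          simp only [hmu]
          rw [if_pos hcl, hcl, eres_top_right hptop]
        rw [hml, EReal.bot_add]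
        exact hbot
      · have hmueq : mu l = max (eres p (c l)) (t:EReal) := by
          simp only [hmu]
          rw [if_neg hcl]
        rw [hmueq, sup2_add]
        apply max_lt
        · exact lt_of_le_of_lt ((eres_galois _ p (c l)).2 (le_refl _)) hpc
        · exact ht l hcl
    exact absurd (lt_of_le_of_lt (le_trans hlower hmain) hupper) (lt_irrefl _)
  exact ⟨d, funext fun i => le_antisymm (hle2 i) (hle1 i)⟩

end KeyE


/-- For `S ∈ {FT, T̄}` (formalised as `ℝ` and `EReal` with tropical operations),
linear surjectivity of column spaces, linear embeddability of row spaces, and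
the existence of `C` with `A R C ≤_L B` are equivalent. -/
theorem stmt10 (n : ℕ) [NeZero n] : SurjEmbedTFAE ℝ n ∧ SurjEmbedTFAE EReal n :=
  ⟨glueAll (fun a b => a - b)
      (fun z a b => by constructor <;> intro h <;> linarith) (keyR n),
    glueAll eres eres_galois (keyE n)⟩
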